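/- For the bicriteria objective (duration, cost), the number of nondominated points in the objective space of (s,z)-paths is at most S·|δ⁻(z)| ≤ m², where S is the number of distinct availability times of edges leaving s and m is the number of temporal edges. -/

import Mathlib

/-- A weighted temporal edge: source, destination, availability time,
traversal time, and real cost. -/
structure TEdge (V : Type) where
  src : V
  dst : V
  time : ℕ
  lam : ℕ
  cost : ℝ

variable {V : Type}

/-- Temporal compatibility of consecutive edges. -/
def TEdge.Compat (e f : TEdge V) : Prop := e.dst = f.src ∧ e.time + e.lam ≤ f.time

/-- A temporal (s,z)-walk in the edge set `E`. -/
def IsWalk (E : Set (TEdge V)) (s z : V) (P : List (TEdge V)) : Prop :=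
  P ≠ [] ∧ (∀ e ∈ P, e ∈ E) ∧ P.Chain' TEdge.Compat ∧
  (∀ e, P.head? = some e → e.src = s) ∧ (∀ e, P.getLast? = some e → e.dst = z)

/-- The sequence of vertices visited by a walk. -/
def visitedVerts (P : List (TEdge V)) : List V :=
  (P.head?.elim [] fun e => [e.src]) ++ P.map TEdge.dst

/-- A temporal path: a simple temporal walk. -/
def IsPath (E : Set (TEdge V)) (s z : V) (P : List (TEdge V)) : Prop :=
  IsWalk E s z P ∧ (visitedVerts P).Nodup

/-- Cost of a walk. -/
noncomputable def wcost (P : List (TEdge V)) : ℝ := (P.map TEdge.cost).sum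

/-- Arrival time of a walk. -/
def warr (P : List (TEdge V)) : ℕ := P.getLast?.elim 0 fun e => e.time + e.lam

/-- Starting time of a walk. -/
def wstart (P : List (TEdge V)) : ℕ := P.head?.elim 0 fun e => e.time

/-- Duration of a walk. -/
def wdur (P : List (TEdge V)) : ℕ := warr P - wstart P

/-- `Q` dominates `P` w.r.t. cost and the temporal objective `f`. -/
def Dominates (f : List (TEdge V) → ℕ) (Q P : List (TEdge V)) : Prop :=
  (wcost Q < wcost P ∧ f Q ≤ f P) ∨ (wcost Q ≤ wcost P ∧ f Q < f P)

/-- `P` is efficient within the set `X` w.r.t. cost and objective `f`. -/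
def EfficientIn (X : Set (List (TEdge V))) (f : List (TEdge V) → ℕ) (P : List (TEdge V)) : Prop :=
  P ∈ X ∧ ∀ Q ∈ X, ¬ Dominates f Q P

/-- Domination of points in the (temporal value, cost) objective space. -/
def PDom (p q : ℕ × ℝ) : Prop := (p.1 ≤ q.1 ∧ p.2 < q.2) ∨ (p.1 < q.1 ∧ p.2 ≤ q.2)

/-- for the (duration, cost) objective, the number of
nondominated points is at most S·|δ⁻(z)| ≤ m², where S is the number of
distinct availability times of edges leaving s. -/
theorem stmt6 (E : Set (TEdge V)) (hE : E.Finite) (s z : V) :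
    let Y : Set (ℕ × ℝ) := (fun P => (wdur P, wcost P)) '' {P | IsPath E s z P}
    {p ∈ Y | ∀ q ∈ Y, ¬ PDom q p}.ncard ≤
      (TEdge.time '' {e ∈ E | e.src = s}).ncard * {e ∈ E | e.dst = z}.ncard ∧
    (TEdge.time '' {e ∈ E | e.src = s}).ncard * {e ∈ E | e.dst = z}.ncard ≤
      E.ncard * E.ncard := by
  intro Y
  set S1 : Set ℕ := TEdge.time '' {e ∈ E | e.src = s} with hS1
  set D1 : Set (TEdge V) := {e ∈ E | e.dst = z} with hD1
  have hS1fin : S1.Finite := (hE.subset (fun e he => he.1)).image _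
  have hD1fin : D1.Finite := hE.subset (fun e he => he.1)
  constructor
  · set N : Set (ℕ × ℝ) := {p ∈ Y | ∀ q ∈ Y, ¬ PDom q p} with hN
    have hchoice : ∀ p ∈ N, ∃ P, IsPath E s z P ∧ (wdur P, wcost P) = p := by
      intro p hp
      obtain ⟨P, hP, h⟩ := hp.1
      exact ⟨P, hP, h⟩
    choose! F hF1 hF2 using hchoice
    set g : ℕ × ℝ → ℕ × Option (TEdge V) := fun p => (wstart (F p), (F p).getLast?) with hg
    have hne : ∀ p ∈ N, F p ≠ [] := fun p hp => (hF1 p hp).1.1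
    have hmem : ∀ p ∈ N, g p ∈ S1 ×ˢ (Option.some '' D1) := by
      intro p hp
      obtain ⟨⟨hne', hEmem, _, hhead, hlast⟩, _⟩ := hF1 p hp
      constructor
      · have h1 : (F p).head? = some ((F p).head hne') := List.head?_eq_head hne'
        refine ⟨(F p).head hne', ⟨hEmem _ (List.head_mem hne'), hhead _ h1⟩, ?_⟩
        simp [hg, wstart, h1]
      · have h2 : (F p).getLast? = some ((F p).getLast hne') := List.getLast?_eq_getLast hne'
        exact ⟨(F p).getLast hne', ⟨hEmem _ (List.getLast_mem hne'), hlast _ h2⟩, h2.symm⟩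
    have hinj : Set.InjOn g N := by
      intro p hp q hq hpq
      have h1 : wstart (F p) = wstart (F q) := congrArg Prod.fst hpq
      have h2 : (F p).getLast? = (F q).getLast? := congrArg Prod.snd hpq
      have h3 : warr (F p) = warr (F q) := by unfold warr; rw [h2]
      have h4 : wdur (F p) = wdur (F q) := by unfold wdur; rw [h1, h3]
      have hp1 : p.1 = q.1 := by
        rw [← congrArg Prod.fst (hF2 p hp), ← congrArg Prod.fst (hF2 q hq)]
        exact h4
      by_contra hpqne
      have hp2 : p.2 ≠ q.2 := fun h => hpqne (Prod.ext hp1 h)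
      rcases lt_or_gt_of_ne hp2 with h | h
      · exact hq.2 p hp.1 (Or.inl ⟨le_of_eq hp1, h⟩)
      · exact hp.2 q hq.1 (Or.inl ⟨le_of_eq hp1.symm, h⟩)
    calc N.ncard ≤ (S1 ×ˢ (Option.some '' D1)).ncard := by
          exact Set.ncard_le_ncard_of_injOn g hmem hinj (hS1fin.prod (hD1fin.image _))
      _ = S1.ncard * (Option.some '' D1).ncard := by
          rw [← Nat.card_coe_set_eq, ← Nat.card_coe_set_eq,
            ← Nat.card_coe_set_eq, Nat.card_congr (Equiv.Set.prod _ _), Nat.card_prod]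
      _ = S1.ncard * D1.ncard := by
          rw [Set.ncard_image_of_injective _ (Option.some_injective _)]
  · have h1 : S1.ncard ≤ E.ncard := by
      calc S1.ncard ≤ {e ∈ E | e.src = s}.ncard :=
            Set.ncard_image_le (hE.subset fun e he => he.1)
        _ ≤ E.ncard := Set.ncard_le_ncard (fun e he => he.1) hE
    have h2 : D1.ncard ≤ E.ncard := Set.ncard_le_ncard (fun e he => he.1) hE
    exact Nat.mul_le_mul h1 h2
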